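/- Let β^(4) = (β_{ij})_{0≤i+j≤4} be a real sequence whose 6×6 moment matrix M(2) is positive semidefinite with rank M(2) = 5, and suppose the column of M(2) labeled XY is the zero vector (equivalently, β_{11} = β_{21} = β_{12} = β_{31} = β_{22} = β_{13} = 0). Then β^(4) admits a representing measure μ whose support has cardinality at most 6. -/

import Mathlib

/-- Index set for the moment matrix of degree `n`:
pairs `(i,j)` of nonnegative integers with `i + j ≤ n`. -/
abbrev MIdx (n : ℕ) := {ij : Fin (n+1) × Fin (n+1) // (ij.1 : ℕ) + (ij.2 : ℕ) ≤ n}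

/-- The moment matrix `M(n)` of a real sequence `β = (β_{ij})`:
`M(n)[(i,j),(k,l)] = β_{i+k, j+l}`. -/
def momentMatrix (n : ℕ) (β : ℕ → ℕ → ℝ) : Matrix (MIdx n) (MIdx n) ℝ :=
  fun p q => β ((p.val.1 : ℕ) + (q.val.1 : ℕ)) ((p.val.2 : ℕ) + (q.val.2 : ℕ))
open Matrix

noncomputable def i00 : MIdx 2 := ⟨(0,0), by decide⟩
noncomputable def i10 : MIdx 2 := ⟨(1,0), by decide⟩
noncomputable def i01 : MIdx 2 := ⟨(0,1), by decide⟩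
noncomputable def i20 : MIdx 2 := ⟨(2,0), by decide⟩
noncomputable def i11 : MIdx 2 := ⟨(1,1), by decide⟩
noncomputable def i02 : MIdx 2 := ⟨(0,2), by decide⟩

lemma sum_MIdx2 (f : MIdx 2 → ℝ) :
    ∑ z, f z = f i00 + f i10 + f i01 + f i20 + f i11 + f i02 := by
  have : (Finset.univ : Finset (MIdx 2)) = {i00, i10, i01, i20, i11, i02} := by decide
  rw [this, Finset.sum_insert (by decide), Finset.sum_insert (by decide),
    Finset.sum_insert (by decide), Finset.sum_insert (by decide),
    Finset.sum_insert (by decide), Finset.sum_singleton]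
  ring

noncomputable def eXY : MIdx 2 → ℝ := fun z => if z = i11 then 1 else 0

theorem hQ_strict (β : ℕ → ℕ → ℝ)
    (hpsd : (momentMatrix 2 β).PosSemidef)
    (hrank : (momentMatrix 2 β).rank = 5)
    (hXY : β 1 1 = 0 ∧ β 2 1 = 0 ∧ β 1 2 = 0 ∧ β 3 1 = 0 ∧ β 2 2 = 0 ∧ β 1 3 = 0)
    (v : MIdx 2 → ℝ) (hv11 : v i11 = 0) (hv : v ≠ 0) :
    0 < v ⬝ᵥ ((momentMatrix 2 β) *ᵥ v) := by
  obtain ⟨h11, h21, h12, h31, h22, h13⟩ := hXY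
  set M := momentMatrix 2 β with hM
  have hMe : M *ᵥ eXY = 0 := by
    funext z
    show ∑ w, M z w * eXY w = 0
    rw [sum_MIdx2 (fun w => M z w * eXY w)]
    simp only [eXY, if_pos rfl, if_neg (by decide : i00 ≠ i11),
      if_neg (by decide : i10 ≠ i11), if_neg (by decide : i01 ≠ i11),
      if_neg (by decide : i20 ≠ i11), if_neg (by decide : i02 ≠ i11)]
    have : M z i11 = 0 := by
      have hz6 : z = i00 ∨ z = i10 ∨ z = i01 ∨ z = i20 ∨ z = i11 ∨ z = i02 := by
        revert z; decide
      rcases hz6 with rfl | rfl | rfl | rfl | rfl | rfl <;>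
        simp_all [M, momentMatrix, i00, i10, i01, i20, i11, i02]
    rw [this]; ring
  -- kernel dimension
  have hfr : Module.finrank ℝ (LinearMap.ker M.mulVecLin) = 1 := by
    have h1 := LinearMap.finrank_range_add_finrank_ker M.mulVecLin
    have h2 : Module.finrank ℝ (MIdx 2 → ℝ) = 6 := by
      rw [Module.finrank_fintype_fun_eq_card]; decide
    have h3 : Module.finrank ℝ (LinearMap.range M.mulVecLin) = 5 := hrank
    omega
  have heker : eXY ∈ LinearMap.ker M.mulVecLin := by
    simpa [Matrix.mulVecLin_apply] using hMe
  have hene : eXY ≠ 0 := by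
    intro h
    have := congrFun h i11
    simp [eXY] at this
  have hker_eq : LinearMap.ker M.mulVecLin = Submodule.span ℝ {eXY} := by
    symm
    apply Submodule.eq_of_le_of_finrank_le
    · rwa [Submodule.span_singleton_le_iff_mem]
    · rw [hfr, finrank_span_singleton hene]
  -- strict positivity
  rcases lt_or_eq_of_le (by simpa using hpsd.dotProduct_mulVec_nonneg v) with h | h
  · exact h
  have hzero : M *ᵥ v = 0 := by
    have := (hpsd.dotProduct_mulVec_zero_iff v).mp (by simpa using h.symm)
    simpa using this
  have hvmem : v ∈ LinearMap.ker M.mulVecLin := by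
    simpa [Matrix.mulVecLin_apply] using hzero
  rw [hker_eq, Submodule.mem_span_singleton] at hvmem
  obtain ⟨c, hc⟩ := hvmem
  exfalso
  apply hv
  have hc0 : c = 0 := by
    have := congrFun hc.symm i11
    simpa [eXY, hv11] using this.symm
  rw [← hc, hc0, zero_smul]

noncomputable def vfun (p q q' r r' : ℝ) : MIdx 2 → ℝ := fun z =>
  if z = i00 then p else if z = i10 then q else if z = i01 then q'
  else if z = i20 then r else if z = i02 then r' else 0

lemma vfun_i00 (p q q' r r' : ℝ) : vfun p q q' r r' i00 = p := if_pos rfl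
lemma vfun_i10 (p q q' r r' : ℝ) : vfun p q q' r r' i10 = q := by
  rw [vfun, if_neg (by decide), if_pos rfl]
lemma vfun_i01 (p q q' r r' : ℝ) : vfun p q q' r r' i01 = q' := by
  rw [vfun, if_neg (by decide), if_neg (by decide), if_pos rfl]
lemma vfun_i20 (p q q' r r' : ℝ) : vfun p q q' r r' i20 = r := by
  rw [vfun, if_neg (by decide), if_neg (by decide), if_neg (by decide), if_pos rfl]
lemma vfun_i02 (p q q' r r' : ℝ) : vfun p q q' r r' i02 = r' := by
  rw [vfun, if_neg (by decide), if_neg (by decide), if_neg (by decide), if_neg (by decide),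
    if_pos rfl]
lemma vfun_i11 (p q q' r r' : ℝ) : vfun p q q' r r' i11 = 0 := by
  rw [vfun, if_neg (by decide), if_neg (by decide), if_neg (by decide), if_neg (by decide),
    if_neg (by decide)]

lemma Qexpand (β : ℕ → ℕ → ℝ) (p q q' r r' : ℝ) :
    (vfun p q q' r r') ⬝ᵥ ((momentMatrix 2 β) *ᵥ (vfun p q q' r r')) =
      p^2*β 0 0 + 2*p*q*β 1 0 + 2*p*q'*β 0 1 + 2*p*r*β 2 0 + 2*p*r'*β 0 2
      + q^2*β 2 0 + 2*q*r*β 3 0 + r^2*β 4 0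
      + q'^2*β 0 2 + 2*q'*r'*β 0 3 + r'^2*β 0 4
      + 2*q*q'*β 1 1 + 2*q*r'*β 1 2 + 2*q'*r*β 2 1 + 2*r*r'*β 2 2 := by
  show ∑ z, vfun p q q' r r' z * ∑ w, momentMatrix 2 β z w * vfun p q q' r r' w = _
  rw [sum_MIdx2]
  rw [sum_MIdx2 (fun w => momentMatrix 2 β i00 w * vfun p q q' r r' w),
      sum_MIdx2 (fun w => momentMatrix 2 β i10 w * vfun p q q' r r' w),
      sum_MIdx2 (fun w => momentMatrix 2 β i01 w * vfun p q q' r r' w),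
      sum_MIdx2 (fun w => momentMatrix 2 β i20 w * vfun p q q' r r' w),
      sum_MIdx2 (fun w => momentMatrix 2 β i11 w * vfun p q q' r r' w),
      sum_MIdx2 (fun w => momentMatrix 2 β i02 w * vfun p q q' r r' w)]
  simp only [vfun_i00, vfun_i10, vfun_i01, vfun_i20, vfun_i02, vfun_i11]
  norm_num [momentMatrix, i00, i10, i01, i20, i11, i02]
  ring

/-- key identity + positivity: gives both distinctness and weight positivity -/
lemma wpos2 (γ0 γ1 γ2 γ3 γ4 a b c : ℝ)
    (hPD : ∀ p q r : ℝ, ¬(p = 0 ∧ q = 0 ∧ r = 0) →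
      0 < p^2*γ0 + 2*p*q*γ1 + (2*p*r + q^2)*γ2 + 2*q*r*γ3 + r^2*γ4)
    (hA2 : γ3 - (a+b+c)*γ2 + (a*b+a*c+b*c)*γ1 - a*b*c*γ0 = 0)
    (hB2 : γ4 - (a+b+c)*γ3 + (a*b+a*c+b*c)*γ2 - a*b*c*γ1 = 0) :
    a ≠ b ∧ a ≠ c ∧ 0 < (γ2 - (b+c)*γ1 + b*c*γ0) / ((a-b)*(a-c)) := by
  have hq3 : 0 < (b*c)^2*γ0 + 2*(b*c)*(-(b+c))*γ1 + (2*(b*c)*1 + (-(b+c))^2)*γ2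
      + 2*(-(b+c))*1*γ3 + 1^2*γ4 := hPD (b*c) (-(b+c)) 1 (by simp)
  have hkey : (γ2 - (b+c)*γ1 + b*c*γ0) * ((a-b)*(a-c))
      = (b*c)^2*γ0 + 2*(b*c)*(-(b+c))*γ1 + (2*(b*c)*1 + (-(b+c))^2)*γ2
      + 2*(-(b+c))*1*γ3 + 1^2*γ4 := by
    linear_combination (b+c-a)*hA2 - hB2
  have h1 : 0 < (γ2 - (b+c)*γ1 + b*c*γ0) * ((a-b)*(a-c)) := hkey ▸ hq3
  have hab : a ≠ b := by
    intro h; rw [h, sub_self, zero_mul, mul_zero] at h1; exact lt_irrefl 0 h1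
  have hac : a ≠ c := by
    intro h; rw [h, sub_self, mul_zero, mul_zero] at h1; exact lt_irrefl 0 h1
  have hdne : ((a-b)*(a-c)) ≠ 0 :=
    mul_ne_zero (sub_ne_zero.mpr hab) (sub_ne_zero.mpr hac)
  refine ⟨hab, hac, ?_⟩
  have h2 : (γ2 - (b+c)*γ1 + b*c*γ0) / ((a-b)*(a-c))
      = ((γ2 - (b+c)*γ1 + b*c*γ0) * ((a-b)*(a-c))) / ((a-b)*(a-c))^2 := by
    field_simp
  rw [h2]
  positivity

lemma cubic_root (d1 d0 : ℝ) : ∃ s : ℝ, s^3 - d1*s - d0 = 0 := by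
  have hc : Continuous fun x : ℝ => x^3 - d1*x - d0 := by continuity
  set x := |d1| with hx
  set y := |d0| with hy
  have hx0 : 0 ≤ x := abs_nonneg d1
  have hy0 : 0 ≤ y := abs_nonneg d0
  have h3 : 0 ≤ (1+x+y)^3 - x*(1+x+y) - y := by nlinarith [sq_nonneg (x+y)]
  have hfhi : 0 ≤ (1+x+y)^3 - d1*(1+x+y) - d0 := by
    have h1 : d1*(1+x+y) ≤ x*(1+x+y) :=
      mul_le_mul_of_nonneg_right (le_abs_self d1) (by positivity)
    have h2 : d0 ≤ y := le_abs_self d0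
    linarith
  have hflo : (-(1+x+y))^3 - d1*(-(1+x+y)) - d0 ≤ 0 := by
    have h1 : d1*(1+x+y) ≤ x*(1+x+y) :=
      mul_le_mul_of_nonneg_right (le_abs_self d1) (by positivity)
    have h2 : -y ≤ d0 := neg_abs_le d0
    nlinarith
  have hIcc := intermediate_value_Icc
    (by nlinarith : -(1+x+y) ≤ (1+x+y)) hc.continuousOn
  obtain ⟨s, -, hs⟩ := hIcc ⟨hflo, hfhi⟩
  exact ⟨s, hs⟩

lemma oneD (γ0 γ1 γ2 γ3 γ4 : ℝ)
    (hPD : ∀ p q r : ℝ, ¬(p = 0 ∧ q = 0 ∧ r = 0) →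
      0 < p^2*γ0 + 2*p*q*γ1 + (2*p*r + q^2)*γ2 + 2*q*r*γ3 + r^2*γ4) :
    ∃ a b c wa wb wc : ℝ, a ≠ b ∧ a ≠ c ∧ b ≠ c ∧ 0 < wa ∧ 0 < wb ∧ 0 < wc ∧
      γ0 = wa + wb + wc ∧ γ1 = wa*a + wb*b + wc*c ∧ γ2 = wa*a^2 + wb*b^2 + wc*c^2 ∧
      γ3 = wa*a^3 + wb*b^3 + wc*c^3 ∧ γ4 = wa*a^4 + wb*b^4 + wc*c^4 := by
  have hγ0 : 0 < γ0 := by nlinarith [hPD 1 0 0 (by simp)]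
  have hdet : 0 < γ0*γ2 - γ1^2 := by
    have h := hPD γ1 (-γ0) 0 (by rintro ⟨-, h, -⟩; nlinarith)
    nlinarith [h]
  have hdetne : γ0*γ2 - γ1^2 ≠ 0 := ne_of_gt hdet
  obtain ⟨c0, hc0⟩ : ∃ c0 : ℝ, c0 = (γ3*γ2 - γ4*γ1)/(γ0*γ2 - γ1^2) := ⟨_, rfl⟩
  obtain ⟨c1, hc1⟩ : ∃ c1 : ℝ, c1 = (γ4*γ0 - γ3*γ1)/(γ0*γ2 - γ1^2) := ⟨_, rfl⟩
  have hA : c0*γ0 + c1*γ1 = γ3 := by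
    rw [hc0, hc1, div_mul_eq_mul_div, div_mul_eq_mul_div, ← add_div, div_eq_iff hdetne]; ring
  have hB : c0*γ1 + c1*γ2 = γ4 := by
    rw [hc0, hc1, div_mul_eq_mul_div, div_mul_eq_mul_div, ← add_div, div_eq_iff hdetne]; ring
  obtain ⟨s, hs⟩ := cubic_root c1 c0
  -- nonnegative discriminant
  have hD : 0 ≤ 4*c1 - 3*s^2 := by
    by_contra hDneg
    push_neg at hDneg
    have h1 := hPD (-s^2/2) (-s/2) 1 (by rintro ⟨-, -, h⟩; exact one_ne_zero h)
    have h2 := hPD (-s) 1 0 (by rintro ⟨-, h, -⟩; exact one_ne_zero h)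
    have hm : 0 ≤ -(4*c1 - 3*s^2)/4 := by linarith
    have hkey : ((-s^2/2)^2*γ0 + 2*(-s^2/2)*(-s/2)*γ1 + (2*(-s^2/2)*1 + (-s/2)^2)*γ2
        + 2*(-s/2)*1*γ3 + 1^2*γ4)
        + (-(4*c1 - 3*s^2)/4) * ((-s)^2*γ0 + 2*(-s)*1*γ1 + (2*(-s)*0 + 1^2)*γ2
        + 2*1*0*γ3 + 0^2*γ4) = 0 := by
      linear_combination s*hA - hB - (γ1 - s*γ0)*hs
    nlinarith [mul_nonneg hm h2.le]
  -- the two other roots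
  obtain ⟨b, c, e1, e2⟩ : ∃ b c : ℝ, b + c = -s ∧ b*c = s^2 - c1 := by
    refine ⟨(-s - Real.sqrt (4*c1 - 3*s^2))/2, (-s + Real.sqrt (4*c1 - 3*s^2))/2,
      by ring, ?_⟩
    have h := Real.sq_sqrt hD
    linear_combination -h/4
  have hA2 : γ3 - (s+b+c)*γ2 + (s*b+s*c+b*c)*γ1 - s*b*c*γ0 = 0 := by
    linear_combination -hA + (s*γ1 - γ2)*e1 + (γ1 - s*γ0)*e2 - γ0*hs
  have hB2 : γ4 - (s+b+c)*γ3 + (s*b+s*c+b*c)*γ2 - s*b*c*γ1 = 0 := by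
    linear_combination -hB + (s*γ2 - γ3)*e1 + (γ2 - s*γ1)*e2 - γ1*hs
  obtain ⟨hsb, hsc, hwa'⟩ := wpos2 γ0 γ1 γ2 γ3 γ4 s b c hPD hA2 hB2
  obtain ⟨hbs, hbc, hwb'⟩ := wpos2 γ0 γ1 γ2 γ3 γ4 b s c hPD
    (by linear_combination hA2) (by linear_combination hB2)
  obtain ⟨-, -, hwc'⟩ := wpos2 γ0 γ1 γ2 γ3 γ4 c s b hPD
    (by linear_combination hA2) (by linear_combination hB2)
  obtain ⟨wa, hwadef⟩ : ∃ w : ℝ, w = (γ2 - (b+c)*γ1 + b*c*γ0) / ((s-b)*(s-c)) := ⟨_, rfl⟩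
  obtain ⟨wb, hwbdef⟩ : ∃ w : ℝ, w = (γ2 - (s+c)*γ1 + s*c*γ0) / ((b-s)*(b-c)) := ⟨_, rfl⟩
  obtain ⟨wc, hwcdef⟩ : ∃ w : ℝ, w = (γ2 - (s+b)*γ1 + s*b*γ0) / ((c-s)*(c-b)) := ⟨_, rfl⟩
  have hwa : 0 < wa := by rw [hwadef]; exact hwa'
  have hwb : 0 < wb := by rw [hwbdef]; exact hwb'
  have hwc : 0 < wc := by rw [hwcdef]; exact hwc'
  have hsbne : s - b ≠ 0 := sub_ne_zero.mpr hsb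
  have hscne : s - c ≠ 0 := sub_ne_zero.mpr hsc
  have hbcne : b - c ≠ 0 := sub_ne_zero.mpr hbc
  have hwa_mul : wa * ((s-b)*(s-c)) = γ2 - (b+c)*γ1 + b*c*γ0 := by
    rw [hwadef]; exact div_mul_cancel₀ _ (mul_ne_zero hsbne hscne)
  have hwb_mul : wb * ((b-s)*(b-c)) = γ2 - (s+c)*γ1 + s*c*γ0 := by
    rw [hwbdef]
    exact div_mul_cancel₀ _ (mul_ne_zero (sub_ne_zero.mpr hbs) hbcne)
  have hwc_mul : wc * ((c-s)*(c-b)) = γ2 - (s+b)*γ1 + s*b*γ0 := by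
    rw [hwcdef]
    exact div_mul_cancel₀ _
      (mul_ne_zero (sub_ne_zero.mpr (Ne.symm hsc)) (sub_ne_zero.mpr (Ne.symm hbc)))
  have hDne : ((s-b)*(s-c)*(b-c)) ≠ 0 := mul_ne_zero (mul_ne_zero hsbne hscne) hbcne
  have h0 : γ0 = wa + wb + wc := by
    apply mul_right_cancel₀ hDne
    linear_combination -(b-c)*hwa_mul + (s-c)*hwb_mul - (s-b)*hwc_mul
  have h1 : γ1 = wa*s + wb*b + wc*c := by
    apply mul_right_cancel₀ hDne
    linear_combination -(s*(b-c))*hwa_mul + (b*(s-c))*hwb_mul - (c*(s-b))*hwc_mul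
  have h2 : γ2 = wa*s^2 + wb*b^2 + wc*c^2 := by
    apply mul_right_cancel₀ hDne
    linear_combination -(s^2*(b-c))*hwa_mul + (b^2*(s-c))*hwb_mul - (c^2*(s-b))*hwc_mul
  have h3 : γ3 = wa*s^3 + wb*b^3 + wc*c^3 := by
    linear_combination hA2 + (s+b+c)*h2 - (s*b+s*c+b*c)*h1 + s*b*c*h0
  have h4 : γ4 = wa*s^4 + wb*b^4 + wc*c^4 := by
    linear_combination hB2 + (s+b+c)*h3 - (s*b+s*c+b*c)*h2 + s*b*c*h1
  exact ⟨s, b, c, wa, wb, wc, hsb, hsc, hbc, hwa, hwb, hwc, h0, h1, h2, h3, h4⟩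


lemma pd3 (a b10 b20 b40 b30 : ℝ) (hb20 : 0 < b20) (hDx : 0 < b20*b40 - b30^2)
    (ha : 0 < a*(b20*b40 - b30^2) - (b10^2*b40 - 2*b10*b20*b30 + b20^3)) :
    ∀ p q r : ℝ, ¬(p = 0 ∧ q = 0 ∧ r = 0) →
      0 < p^2*a + 2*p*q*b10 + (2*p*r + q^2)*b20 + 2*q*r*b30 + r^2*b40 := by
  intro p q r hpqr
  rcases eq_or_ne p 0 with hp | hp
  · subst hp
    rcases eq_or_ne r 0 with hr | hr
    · subst hr
      have hq : q ≠ 0 := by tauto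
      have hq2 : 0 < q^2 := by rcases hq.lt_or_gt with h | h <;> nlinarith
      nlinarith [mul_pos hq2 hb20]
    · have hr2 : 0 < r^2 := by rcases hr.lt_or_gt with h | h <;> nlinarith
      nlinarith [sq_nonneg (b20*q + b30*r), mul_pos hDx hr2, hb20]
  · have hp2 : 0 < p^2 := by rcases hp.lt_or_gt with h | h <;> nlinarith
    have hid : b20*(b20*b40-b30^2)^2*(p^2*a + 2*p*q*b10 + (2*p*r+q^2)*b20 + 2*q*r*b30 + r^2*b40)
        = b20*(b20*b40-b30^2)*(a*(b20*b40-b30^2) - (b10^2*b40 - 2*b10*b20*b30 + b20^3))*p^2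
        + (b20*((b20*b40-b30^2)*q + p*(b40*b10-b30*b20))
            + b30*((b20*b40-b30^2)*r + p*(b20^2-b30*b10)))^2
        + (b20*b40-b30^2)*((b20*b40-b30^2)*r + p*(b20^2-b30*b10))^2 := by ring
    have h1 : 0 < b20*(b20*b40-b30^2)*(a*(b20*b40-b30^2)
        - (b10^2*b40 - 2*b10*b20*b30 + b20^3))*p^2 :=
      mul_pos (mul_pos (mul_pos hb20 hDx) ha) hp2
    have hKQ : 0 < b20*(b20*b40-b30^2)^2*(p^2*a + 2*p*q*b10 + (2*p*r+q^2)*b20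
        + 2*q*r*b30 + r^2*b40) := by
      rw [hid]
      have h2 : (0:ℝ) ≤ (b20*((b20*b40-b30^2)*q + p*(b40*b10-b30*b20))
          + b30*((b20*b40-b30^2)*r + p*(b20^2-b30*b10)))^2 := sq_nonneg _
      have h3 : (0:ℝ) ≤ (b20*b40-b30^2)*((b20*b40-b30^2)*r + p*(b20^2-b30*b10))^2 :=
        mul_nonneg hDx.le (sq_nonneg _)
      linarith
    have hK : (0:ℝ) < b20*(b20*b40-b30^2)^2 := by positivity
    by_contra hcon
    push_neg at hcon
    nlinarith [mul_nonneg hK.le (neg_nonneg.mpr hcon)]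


set_option maxHeartbeats 4000000 in
/-- Proposition 5.5 of [CuFi6], real form. If the moment matrix `M(2)`
of `β^(4)` is positive semidefinite of rank 5 and the column labeled `XY` is zero
(equivalently `β₁₁ = β₂₁ = β₁₂ = β₃₁ = β₂₂ = β₁₃ = 0`), then `β^(4)` admits a
representing measure whose support has cardinality at most 6, i.e. a finitely atomic
representing measure, with positive weights on a set of at most 6 distinct points. -/
theorem degenerate_hyperbola_case_has_atmost_six_atomic_measure
    (β : ℕ → ℕ → ℝ) (hβ00 : 0 < β 0 0)
    (hpsd : (momentMatrix 2 β).PosSemidef)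
    (hrank : (momentMatrix 2 β).rank = 5)
    (hXY : β 1 1 = 0 ∧ β 2 1 = 0 ∧ β 1 2 = 0 ∧ β 3 1 = 0 ∧ β 2 2 = 0 ∧ β 1 3 = 0) :
    ∃ (S : Finset (ℝ × ℝ)) (ρ : ℝ × ℝ → ℝ),
      S.card ≤ 6 ∧
      (∀ z ∈ S, 0 < ρ z) ∧
      (∀ i j : ℕ, i + j ≤ 4 → β i j = ∑ z ∈ S, ρ z * z.1 ^ i * z.2 ^ j) := by
  obtain ⟨h11, h21, h12, h31, h22, h13⟩ := hXY
  have hQ := hQ_strict β hpsd hrank ⟨h11, h21, h12, h31, h22, h13⟩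
  -- β20 > 0
  have hb20 : 0 < β 2 0 := by
    have hv : vfun 0 1 0 0 0 ≠ 0 := by
      intro h; have := congrFun h i10; rw [vfun_i10] at this; simp at this
    have hq := hQ (vfun 0 1 0 0 0) (vfun_i11 _ _ _ _ _) hv
    rw [Qexpand] at hq; nlinarith [hq]
  have hb02 : 0 < β 0 2 := by
    have hv : vfun 0 0 1 0 0 ≠ 0 := by
      intro h; have := congrFun h i01; rw [vfun_i01] at this; simp at this
    have hq := hQ (vfun 0 0 1 0 0) (vfun_i11 _ _ _ _ _) hv
    rw [Qexpand] at hq; nlinarith [hq]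
  have hDx : 0 < β 2 0 * β 4 0 - (β 3 0)^2 := by
    have hv : vfun 0 (β 3 0) 0 (-(β 2 0)) 0 ≠ 0 := by
      intro h; have h2 := congrFun h i20; rw [vfun_i20] at h2
      simp at h2; linarith
    have hq := hQ _ (vfun_i11 (0:ℝ) (β 3 0) 0 (-(β 2 0)) 0) hv
    rw [Qexpand] at hq
    nlinarith [hq, hb20]
  have hDy : 0 < β 0 2 * β 0 4 - (β 0 3)^2 := by
    have hv : vfun 0 0 (β 0 3) 0 (-(β 0 2)) ≠ 0 := by
      intro h; have h2 := congrFun h i02; rw [vfun_i02] at h2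
      simp at h2; linarith
    have hq := hQ _ (vfun_i11 (0:ℝ) 0 (β 0 3) 0 (-(β 0 2))) hv
    rw [Qexpand] at hq
    nlinarith [hq, hb02]
  have hDxne : β 2 0 * β 4 0 - (β 3 0)^2 ≠ 0 := ne_of_gt hDx
  have hDyne : β 0 2 * β 0 4 - (β 0 3)^2 ≠ 0 := ne_of_gt hDy
  -- the split
  have hsplit : 0 < β 0 0
      - ((β 1 0)^2*(β 4 0) - 2*(β 1 0)*(β 2 0)*(β 3 0) + (β 2 0)^3)/(β 2 0 * β 4 0 - (β 3 0)^2)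
      - ((β 0 1)^2*(β 0 4) - 2*(β 0 1)*(β 0 2)*(β 0 3) + (β 0 2)^3)/(β 0 2 * β 0 4 - (β 0 3)^2) := by
    have hv : vfun 1 (-((β 4 0)*(β 1 0) - (β 3 0)*(β 2 0))/(β 2 0 * β 4 0 - (β 3 0)^2))
        (-((β 0 4)*(β 0 1) - (β 0 3)*(β 0 2))/(β 0 2 * β 0 4 - (β 0 3)^2))
        (((β 3 0)*(β 1 0) - (β 2 0)^2)/(β 2 0 * β 4 0 - (β 3 0)^2))
        (((β 0 3)*(β 0 1) - (β 0 2)^2)/(β 0 2 * β 0 4 - (β 0 3)^2)) ≠ 0 := by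
      intro h; have := congrFun h i00; rw [vfun_i00] at this; simp at this
    have hq := hQ _ (vfun_i11 _ _ _ _ _) hv
    rw [Qexpand] at hq
    have hEq : (1:ℝ)^2*β 0 0 + 2*1*(-((β 4 0)*(β 1 0) - (β 3 0)*(β 2 0))/(β 2 0 * β 4 0 - (β 3 0)^2))*β 1 0 + 2*1*(-((β 0 4)*(β 0 1) - (β 0 3)*(β 0 2))/(β 0 2 * β 0 4 - (β 0 3)^2))*β 0 1 + 2*1*(((β 3 0)*(β 1 0) - (β 2 0)^2)/(β 2 0 * β 4 0 - (β 3 0)^2))*β 2 0 + 2*1*(((β 0 3)*(β 0 1) - (β 0 2)^2)/(β 0 2 * β 0 4 - (β 0 3)^2))*β 0 2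
        + (-((β 4 0)*(β 1 0) - (β 3 0)*(β 2 0))/(β 2 0 * β 4 0 - (β 3 0)^2))^2*β 2 0 + 2*(-((β 4 0)*(β 1 0) - (β 3 0)*(β 2 0))/(β 2 0 * β 4 0 - (β 3 0)^2))*(((β 3 0)*(β 1 0) - (β 2 0)^2)/(β 2 0 * β 4 0 - (β 3 0)^2))*β 3 0 + (((β 3 0)*(β 1 0) - (β 2 0)^2)/(β 2 0 * β 4 0 - (β 3 0)^2))^2*β 4 0
        + (-((β 0 4)*(β 0 1) - (β 0 3)*(β 0 2))/(β 0 2 * β 0 4 - (β 0 3)^2))^2*β 0 2 + 2*(-((β 0 4)*(β 0 1) - (β 0 3)*(β 0 2))/(β 0 2 * β 0 4 - (β 0 3)^2))*(((β 0 3)*(β 0 1) - (β 0 2)^2)/(β 0 2 * β 0 4 - (β 0 3)^2))*β 0 3 + (((β 0 3)*(β 0 1) - (β 0 2)^2)/(β 0 2 * β 0 4 - (β 0 3)^2))^2*β 0 4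
        + 2*(-((β 4 0)*(β 1 0) - (β 3 0)*(β 2 0))/(β 2 0 * β 4 0 - (β 3 0)^2))*(-((β 0 4)*(β 0 1) - (β 0 3)*(β 0 2))/(β 0 2 * β 0 4 - (β 0 3)^2))*β 1 1 + 2*(-((β 4 0)*(β 1 0) - (β 3 0)*(β 2 0))/(β 2 0 * β 4 0 - (β 3 0)^2))*(((β 0 3)*(β 0 1) - (β 0 2)^2)/(β 0 2 * β 0 4 - (β 0 3)^2))*β 1 2 + 2*(-((β 0 4)*(β 0 1) - (β 0 3)*(β 0 2))/(β 0 2 * β 0 4 - (β 0 3)^2))*(((β 3 0)*(β 1 0) - (β 2 0)^2)/(β 2 0 * β 4 0 - (β 3 0)^2))*β 2 1 + 2*(((β 3 0)*(β 1 0) - (β 2 0)^2)/(β 2 0 * β 4 0 - (β 3 0)^2))*(((β 0 3)*(β 0 1) - (β 0 2)^2)/(β 0 2 * β 0 4 - (β 0 3)^2))*β 2 2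
        = β 0 0
        - ((β 1 0)^2*(β 4 0) - 2*(β 1 0)*(β 2 0)*(β 3 0) + (β 2 0)^3)/(β 2 0 * β 4 0 - (β 3 0)^2)
        - ((β 0 1)^2*(β 0 4) - 2*(β 0 1)*(β 0 2)*(β 0 3) + (β 0 2)^3)/(β 0 2 * β 0 4 - (β 0 3)^2) := by
      rw [h11, h21, h12, h22]
      generalize hD : β 2 0 * β 4 0 - (β 3 0)^2 = D at *
      generalize hE : β 0 2 * β 0 4 - (β 0 3)^2 = E at *
      field_simp
      subst hD hE; ring
    linarith [hq, hEq]
  -- split the mass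
  obtain ⟨ax, hax⟩ : ∃ t : ℝ, t = ((β 1 0)^2*(β 4 0) - 2*(β 1 0)*(β 2 0)*(β 3 0)
      + (β 2 0)^3)/(β 2 0 * β 4 0 - (β 3 0)^2) := ⟨_, rfl⟩
  obtain ⟨ay, hay⟩ : ∃ t : ℝ, t = ((β 0 1)^2*(β 0 4) - 2*(β 0 1)*(β 0 2)*(β 0 3)
      + (β 0 2)^3)/(β 0 2 * β 0 4 - (β 0 3)^2) := ⟨_, rfl⟩
  have hsplit' : ax + ay < β 0 0 := by rw [hax, hay]; linarith [hsplit]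
  obtain ⟨a, ha⟩ : ∃ t : ℝ, t = ax + (β 0 0 - ax - ay)/2 := ⟨_, rfl⟩
  obtain ⟨bb, hbb⟩ : ∃ t : ℝ, t = β 0 0 - a := ⟨_, rfl⟩
  have hab : a + bb = β 0 0 := by rw [hbb]; ring
  have hxa : ax < a := by rw [ha]; linarith
  have hyb : ay < bb := by rw [hbb, ha]; linarith
  have hNx : ((β 1 0)^2*(β 4 0) - 2*(β 1 0)*(β 2 0)*(β 3 0) + (β 2 0)^3)
      = ax * (β 2 0 * β 4 0 - (β 3 0)^2) := by
    rw [hax, div_mul_cancel₀ _ hDxne]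
  have hNy : ((β 0 1)^2*(β 0 4) - 2*(β 0 1)*(β 0 2)*(β 0 3) + (β 0 2)^3)
      = ay * (β 0 2 * β 0 4 - (β 0 3)^2) := by
    rw [hay, div_mul_cancel₀ _ hDyne]
  have haQ : 0 < a*(β 2 0 * β 4 0 - (β 3 0)^2) - ((β 1 0)^2*(β 4 0)
      - 2*(β 1 0)*(β 2 0)*(β 3 0) + (β 2 0)^3) := by
    rw [hNx]; nlinarith [hDx, hxa]
  have hbQ : 0 < bb*(β 0 2 * β 0 4 - (β 0 3)^2) - ((β 0 1)^2*(β 0 4)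
      - 2*(β 0 1)*(β 0 2)*(β 0 3) + (β 0 2)^3) := by
    rw [hNy]; nlinarith [hDy, hyb]
  have hPDx := pd3 a (β 1 0) (β 2 0) (β 4 0) (β 3 0) hb20 hDx haQ
  have hPDy := pd3 bb (β 0 1) (β 0 2) (β 0 4) (β 0 3) hb02 hDy hbQ
  obtain ⟨x1, x2, x3, u1, u2, u3, hx12, hx13, hx23, hu1, hu2, hu3,
    gx0, gx1, gx2, gx3, gx4⟩ := oneD a (β 1 0) (β 2 0) (β 3 0) (β 4 0) hPDx
  obtain ⟨y1, y2, y3, v1, v2, v3, hy12, hy13, hy23, hv1, hv2, hv3,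
    gy0, gy1, gy2, gy3, gy4⟩ := oneD bb (β 0 1) (β 0 2) (β 0 3) (β 0 4) hPDy
  set S : Finset (ℝ × ℝ) := {(x1,0),(x2,0),(x3,0),(0,y1),(0,y2),(0,y3)} with hS
  set ρ : ℝ × ℝ → ℝ := fun z =>
    (if z = (x1,0) then u1 else 0) + (if z = (x2,0) then u2 else 0)
    + (if z = (x3,0) then u3 else 0) + (if z = (0,y1) then v1 else 0)
    + (if z = (0,y2) then v2 else 0) + (if z = (0,y3) then v3 else 0) with hρ
  refine ⟨S, ρ, ?_, ?_, ?_⟩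
  · rw [hS]
    refine le_trans (Finset.card_insert_le _ _) (Nat.succ_le_succ ?_)
    refine le_trans (Finset.card_insert_le _ _) (Nat.succ_le_succ ?_)
    refine le_trans (Finset.card_insert_le _ _) (Nat.succ_le_succ ?_)
    refine le_trans (Finset.card_insert_le _ _) (Nat.succ_le_succ ?_)
    refine le_trans (Finset.card_insert_le _ _) (Nat.succ_le_succ ?_)
    simp
  · intro z hz
    have hnn : ∀ (z P : ℝ × ℝ) (w : ℝ), 0 < w → (0:ℝ) ≤ (if z = P then w else 0) := by
      intro z P w hw; split
      · exact hw.le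
      · exact le_refl 0
    rw [hS] at hz
    simp only [Finset.mem_insert, Finset.mem_singleton] at hz
    rcases hz with rfl | rfl | rfl | rfl | rfl | rfl <;> simp only [hρ, if_true]
    · linarith [hnn ((x1,0) : ℝ × ℝ) ((x2,0) : ℝ × ℝ) u2 hu2, hnn ((x1,0) : ℝ × ℝ) ((x3,0) : ℝ × ℝ) u3 hu3, hnn ((x1,0) : ℝ × ℝ) ((0,y1) : ℝ × ℝ) v1 hv1, hnn ((x1,0) : ℝ × ℝ) ((0,y2) : ℝ × ℝ) v2 hv2, hnn ((x1,0) : ℝ × ℝ) ((0,y3) : ℝ × ℝ) v3 hv3, hu1]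
    · linarith [hnn ((x2,0) : ℝ × ℝ) ((x1,0) : ℝ × ℝ) u1 hu1, hnn ((x2,0) : ℝ × ℝ) ((x3,0) : ℝ × ℝ) u3 hu3, hnn ((x2,0) : ℝ × ℝ) ((0,y1) : ℝ × ℝ) v1 hv1, hnn ((x2,0) : ℝ × ℝ) ((0,y2) : ℝ × ℝ) v2 hv2, hnn ((x2,0) : ℝ × ℝ) ((0,y3) : ℝ × ℝ) v3 hv3, hu2]
    · linarith [hnn ((x3,0) : ℝ × ℝ) ((x1,0) : ℝ × ℝ) u1 hu1, hnn ((x3,0) : ℝ × ℝ) ((x2,0) : ℝ × ℝ) u2 hu2, hnn ((x3,0) : ℝ × ℝ) ((0,y1) : ℝ × ℝ) v1 hv1, hnn ((x3,0) : ℝ × ℝ) ((0,y2) : ℝ × ℝ) v2 hv2, hnn ((x3,0) : ℝ × ℝ) ((0,y3) : ℝ × ℝ) v3 hv3, hu3]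
    · linarith [hnn ((0,y1) : ℝ × ℝ) ((x1,0) : ℝ × ℝ) u1 hu1, hnn ((0,y1) : ℝ × ℝ) ((x2,0) : ℝ × ℝ) u2 hu2, hnn ((0,y1) : ℝ × ℝ) ((x3,0) : ℝ × ℝ) u3 hu3, hnn ((0,y1) : ℝ × ℝ) ((0,y2) : ℝ × ℝ) v2 hv2, hnn ((0,y1) : ℝ × ℝ) ((0,y3) : ℝ × ℝ) v3 hv3, hv1]
    · linarith [hnn ((0,y2) : ℝ × ℝ) ((x1,0) : ℝ × ℝ) u1 hu1, hnn ((0,y2) : ℝ × ℝ) ((x2,0) : ℝ × ℝ) u2 hu2, hnn ((0,y2) : ℝ × ℝ) ((x3,0) : ℝ × ℝ) u3 hu3, hnn ((0,y2) : ℝ × ℝ) ((0,y1) : ℝ × ℝ) v1 hv1, hnn ((0,y2) : ℝ × ℝ) ((0,y3) : ℝ × ℝ) v3 hv3, hv2]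
    · linarith [hnn ((0,y3) : ℝ × ℝ) ((x1,0) : ℝ × ℝ) u1 hu1, hnn ((0,y3) : ℝ × ℝ) ((x2,0) : ℝ × ℝ) u2 hu2, hnn ((0,y3) : ℝ × ℝ) ((x3,0) : ℝ × ℝ) u3 hu3, hnn ((0,y3) : ℝ × ℝ) ((0,y1) : ℝ × ℝ) v1 hv1, hnn ((0,y3) : ℝ × ℝ) ((0,y2) : ℝ × ℝ) v2 hv2, hv3]
  · intro i j hij
    have key : ∀ (P : ℝ×ℝ) (w : ℝ), P ∈ S →
        ∑ z ∈ S, (if z = P then w else 0) * z.1^i * z.2^j = w * P.1^i * P.2^j := by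
      intro P w hP
      rw [Finset.sum_eq_single_of_mem P hP]
      · rw [if_pos rfl]
      · intro b _ hb; rw [if_neg hb, zero_mul, zero_mul]
    have expand : ∑ z ∈ S, ρ z * z.1^i * z.2^j
        = u1*x1^i*(0:ℝ)^j + u2*x2^i*(0:ℝ)^j + u3*x3^i*(0:ℝ)^j
        + v1*(0:ℝ)^i*y1^j + v2*(0:ℝ)^i*y2^j + v3*(0:ℝ)^i*y3^j := by
      have step : ∀ z ∈ S, ρ z * z.1^i * z.2^j
          = (if z = (x1,0) then u1 else 0) * z.1^i * z.2^j
          + (if z = (x2,0) then u2 else 0) * z.1^i * z.2^j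
          + (if z = (x3,0) then u3 else 0) * z.1^i * z.2^j
          + (if z = (0,y1) then v1 else 0) * z.1^i * z.2^j
          + (if z = (0,y2) then v2 else 0) * z.1^i * z.2^j
          + (if z = (0,y3) then v3 else 0) * z.1^i * z.2^j := by
        intro z _; rw [hρ]; ring
      rw [Finset.sum_congr rfl step]
      rw [Finset.sum_add_distrib, Finset.sum_add_distrib, Finset.sum_add_distrib,
        Finset.sum_add_distrib, Finset.sum_add_distrib]
      rw [key (x1,0) u1 (by simp [hS]), key (x2,0) u2 (by simp [hS]),
        key (x3,0) u3 (by simp [hS]), key (0,y1) v1 (by simp [hS]),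
        key (0,y2) v2 (by simp [hS]), key (0,y3) v3 (by simp [hS])]
    rw [expand]
    rcases Nat.eq_zero_or_pos j with hj | hj
    · subst hj
      rcases Nat.eq_zero_or_pos i with hi | hi
      · subst hi; norm_num; linarith [gx0, gy0, hab]
      · rw [zero_pow (by omega : i ≠ 0)]
        have hi4 : i ≤ 4 := by omega
        have hi1 : 1 ≤ i := hi
        interval_cases i
        · linear_combination gx1
        · linear_combination gx2
        · linear_combination gx3
        · linear_combination gx4
    · rcases Nat.eq_zero_or_pos i with hi | hi
      · subst hi
        rw [zero_pow (by omega : j ≠ 0)]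
        have hj4 : j ≤ 4 := by omega
        have hj1 : 1 ≤ j := hj
        interval_cases j
        · linear_combination gy1
        · linear_combination gy2
        · linear_combination gy3
        · linear_combination gy4
      · rw [zero_pow (by omega : j ≠ 0), zero_pow (by omega : i ≠ 0)]
        have hi3 : i ≤ 3 := by omega
        have hj3 : j ≤ 3 := by omega
        have hi1 : 1 ≤ i := hi
        have hj1 : 1 ≤ j := hj
        interval_cases i <;> interval_cases j <;> simp_all
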